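/- Let A be a completely positive tensor of odd order m+1 and dimension n. If the sub-tensor A_1 obtained by fixing the first index to 1 is positive definite (as an even order tensor), then A is strongly completely positive. -/
import Mathlib


/-- Let A be a completely positive tensor of odd order m+1 (m even) and
dimension n.  If the sub-tensor A₁ obtained by fixing the first index to 1 is positive
definite (as an even order tensor), then A is strongly completely positive. -/
theorem odd_cp_subtensor_posdef_imp_scp (m n : ℕ) (hm : Even m) (hm0 : m ≠ 0) (hn : 0 < n)
    (A : (Fin (m + 1) → Fin n) → ℝ)
    (hcp : ∃ (r : ℕ) (u : Fin r → Fin n → ℝ),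
      (∀ k i, 0 ≤ u k i) ∧ ∀ idx, A idx = ∑ k, ∏ j, u k (idx j))
    (hpd : ∀ x : Fin n → ℝ, x ≠ 0 →
      0 < ∑ idx : Fin m → Fin n, A (Fin.cons ⟨0, hn⟩ idx) * ∏ j, x (idx j)) :
    ∃ (r : ℕ) (u : Fin r → Fin n → ℝ),
      (∀ k i, 0 ≤ u k i) ∧ (∀ idx, A idx = ∑ k, ∏ j, u k (idx j)) ∧
      Submodule.span ℝ (Set.range u) = ⊤ := by
  obtain ⟨r, u, hnn, hA⟩ := hcp
  refine ⟨r, u, hnn, hA, ?_⟩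
  by_contra hspan
  obtain ⟨f, hf0, hfmap⟩ :=
    Submodule.exists_dual_map_eq_bot_of_lt_top (p := Submodule.span ℝ (Set.range u))
      (lt_top_iff_ne_top.mpr hspan) inferInstance
  set x : Fin n → ℝ := fun i => f (Pi.single i 1) with hxdef
  have hxne : x ≠ 0 := by
    intro h
    apply hf0
    apply (Pi.basisFun ℝ (Fin n)).ext
    intro i
    simpa [Pi.basisFun_apply, x] using congrFun h i
  have hfu : ∀ k, f (u k) = 0 := by
    intro k
    have hmem : u k ∈ Submodule.span ℝ (Set.range u) :=
      Submodule.subset_span ⟨k, rfl⟩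
    have : f (u k) ∈ (Submodule.span ℝ (Set.range u)).map f :=
      Submodule.mem_map_of_mem hmem
    rw [hfmap] at this
    simpa using this
  have hdot : ∀ k, ∑ i, u k i * x i = 0 := by
    intro k
    have hrep : u k = ∑ i, u k i • (Pi.single i 1 : Fin n → ℝ) := by
      ext j
      simp [Pi.single_apply, Finset.sum_ite_eq', mul_comm]
    calc ∑ i, u k i * x i = ∑ i, u k i • f (Pi.single i 1) := by
          simp [x, smul_eq_mul]
      _ = f (∑ i, u k i • (Pi.single i 1 : Fin n → ℝ)) := by
          rw [map_sum]; simp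
      _ = f (u k) := by rw [← hrep]
      _ = 0 := hfu k
  have key : ∑ idx : Fin m → Fin n, A (Fin.cons ⟨0, hn⟩ idx) * ∏ j, x (idx j) = 0 := by
    have h1 : ∀ idx : Fin m → Fin n, A (Fin.cons ⟨0, hn⟩ idx) * ∏ j, x (idx j)
        = ∑ k, u k ⟨0, hn⟩ * ∏ j, (u k (idx j) * x (idx j)) := by
      intro idx
      rw [hA, Finset.sum_mul]
      refine Finset.sum_congr rfl fun k _ => ?_
      rw [Fin.prod_univ_succ]
      simp only [Fin.cons_succ, Fin.cons_zero]
      rw [Finset.prod_mul_distrib]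
      ring
    rw [Finset.sum_congr rfl fun idx _ => h1 idx, Finset.sum_comm]
    refine Finset.sum_eq_zero fun k _ => ?_
    rw [← Finset.mul_sum]
    have h2 : ∑ idx : Fin m → Fin n, ∏ j, (u k (idx j) * x (idx j))
        = ∏ _j : Fin m, ∑ i, u k i * x i := by
      rw [Finset.prod_univ_sum]
      simp [Fintype.piFinset_univ]
    rw [h2]
    simp [hdot k, Finset.prod_const, zero_pow hm0]
  have := hpd x hxne
  rw [key] at this
  exact lt_irrefl 0 this
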